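/- Let Σ be a nonzero real symmetric positive-semidefinite N×N matrix, K a nonzero real symmetric positive-semidefinite T×T matrix, and q > 0. Suppose κ, κ̃ : (0,∞) → (0,∞) are differentiable functions satisfying df¹_K(κ̃(λ)) = q·df¹_Σ(κ(λ)) for all λ > 0. Then for every λ > 0: q·(df¹_Σ(κ(λ)) − df²_Σ(κ(λ)))·κ̃(λ)·κ′(λ) = (df¹_K(κ̃(λ)) − df²_K(κ̃(λ)))·κ(λ)·κ̃′(λ). -/

import Mathlib

open Matrix

/-- First degrees of freedom: `df¹_A(κ) = (1/n)·Tr(A(A + κI)⁻¹)`. -/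
noncomputable def df1 {n : ℕ} (A : Matrix (Fin n) (Fin n) ℝ) (κ : ℝ) : ℝ :=
  (1 / (n : ℝ)) * (A * (A + κ • (1 : Matrix (Fin n) (Fin n) ℝ))⁻¹).trace

/-- Second degrees of freedom: `df²_A(κ) = (1/n)·Tr(A²(A + κI)⁻²)`. -/
noncomputable def df2 {n : ℕ} (A : Matrix (Fin n) (Fin n) ℝ) (κ : ℝ) : ℝ :=
  (1 / (n : ℝ)) * (A ^ 2 * ((A + κ • (1 : Matrix (Fin n) (Fin n) ℝ))⁻¹) ^ 2).trace

lemma key {n : ℕ} (A : Matrix (Fin n) (Fin n) ℝ) (hA : A.PosSemidef) {κ : ℝ} (hκ : 0 < κ) :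
    df1 A κ = (1 / (n:ℝ)) * ∑ i, hA.1.eigenvalues i * (hA.1.eigenvalues i + κ)⁻¹ ∧
    df2 A κ = (1 / (n:ℝ)) * ∑ i, (hA.1.eigenvalues i)^2 * ((hA.1.eigenvalues i + κ)⁻¹)^2 := by
  classical
  set μ := hA.1.eigenvalues with hμ
  set U : Matrix (Fin n) (Fin n) ℝ := (hA.1.eigenvectorUnitary : Matrix (Fin n) (Fin n) ℝ)
  have hU1 : U * star U = 1 := (Matrix.mem_unitaryGroup_iff).mp hA.1.eigenvectorUnitary.2
  have hU2 : star U * U = 1 := (Matrix.mem_unitaryGroup_iff').mp hA.1.eigenvectorUnitary.2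
  have hspec : A = U * diagonal μ * star U := by
    have := hA.1.spectral_theorem
    simpa using this
  have hconj : ∀ X Y : Matrix (Fin n) (Fin n) ℝ,
      (U * X * star U) * (U * Y * star U) = U * (X * Y) * star U := by
    intro X Y
    calc (U * X * star U) * (U * Y * star U) = U * X * (star U * U) * Y * star U := by
          noncomm_ring
      _ = U * (X * Y) * star U := by rw [hU2]; noncomm_ring
  have htr : ∀ X : Matrix (Fin n) (Fin n) ℝ, (U * X * star U).trace = X.trace := by
    intro X
    rw [trace_mul_cycle, hU2, one_mul]
  have hAκ : A + κ • 1 = U * diagonal (fun i => μ i + κ) * star U := by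
    have h1 : (κ • (1:Matrix (Fin n) (Fin n) ℝ)) = U * (κ • 1) * star U := by
      rw [mul_smul_comm, smul_mul_assoc, mul_one, hU1]
    have h2 : diagonal (fun i => μ i + κ) = diagonal μ + κ • (1 : Matrix (Fin n) (Fin n) ℝ) := by
      rw [Matrix.smul_one_eq_diagonal, ← diagonal_add]
    rw [hspec, h2, mul_add, add_mul, ← h1]
  have hne : ∀ i, μ i + κ ≠ 0 := fun i =>
    ne_of_gt (add_pos_of_nonneg_of_pos (hA.eigenvalues_nonneg i) hκ)
  have hinv : (A + κ • 1)⁻¹ = U * diagonal (fun i => (μ i + κ)⁻¹) * star U := by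
    rw [hAκ]
    apply inv_eq_right_inv
    rw [hconj, diagonal_mul_diagonal]
    have : (fun i => (μ i + κ) * (μ i + κ)⁻¹) = fun _ => (1:ℝ) := by
      funext i; exact mul_inv_cancel₀ (hne i)
    rw [this, diagonal_one, mul_one, hU1]
  constructor
  · rw [df1, hinv, hspec, hconj, htr, diagonal_mul_diagonal, trace_diagonal]
  · rw [df2, hinv, hspec]
    rw [sq (U * diagonal μ * star U), sq (U * diagonal (fun i => (μ i + κ)⁻¹) * star U),
      hconj, hconj, hconj, htr, diagonal_mul_diagonal, diagonal_mul_diagonal,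
      diagonal_mul_diagonal, trace_diagonal]
    congr 1
    apply Finset.sum_congr rfl
    intro i _
    ring

lemma df1_hasDerivAt {n : ℕ} (A : Matrix (Fin n) (Fin n) ℝ) (hA : A.PosSemidef) {κ : ℝ}
    (hκ : 0 < κ) : HasDerivAt (df1 A) (-(df1 A κ - df2 A κ) / κ) κ := by
  classical
  set μ := hA.1.eigenvalues with hμ
  have hne : ∀ i, μ i + κ ≠ 0 := fun i =>
    ne_of_gt (add_pos_of_nonneg_of_pos (hA.eigenvalues_nonneg i) hκ)
  have hterm : ∀ i : Fin n,
      HasDerivAt (fun t => μ i * (μ i + t)⁻¹) (μ i * (-1 / (μ i + κ)^2)) κ := by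
    intro i
    have h1 : HasDerivAt (fun t : ℝ => μ i + t) 1 κ := (hasDerivAt_id κ).const_add (μ i)
    exact (h1.inv (hne i)).const_mul (μ i)
  have hg : HasDerivAt (fun t => (1/(n:ℝ)) * ∑ i, μ i * (μ i + t)⁻¹)
      ((1/(n:ℝ)) * ∑ i, μ i * (-1 / (μ i + κ)^2)) κ := by
    have := HasDerivAt.sum (u := Finset.univ) (fun i _ => hterm i)
    simpa using (HasDerivAt.const_mul (1/(n:ℝ)) this)
  have hev : df1 A =ᶠ[nhds κ] (fun t => (1/(n:ℝ)) * ∑ i, μ i * (μ i + t)⁻¹) := by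
    filter_upwards [eventually_gt_nhds hκ] with t ht
    exact (key A hA ht).1
  have hval : -(df1 A κ - df2 A κ) / κ = (1/(n:ℝ)) * ∑ i, μ i * (-1 / (μ i + κ)^2) := by
    have hsum : df1 A κ - df2 A κ = κ * ((1/(n:ℝ)) * ∑ i, μ i * ((μ i + κ)^2)⁻¹) := by
      rw [(key A hA hκ).1, (key A hA hκ).2, ← mul_sub, ← Finset.sum_sub_distrib]
      have : ∑ i, (μ i * (μ i + κ)⁻¹ - μ i^2 * ((μ i + κ)⁻¹)^2)
          = ∑ i, κ * (μ i * ((μ i + κ)^2)⁻¹) := by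
        refine Finset.sum_congr rfl fun i _ => ?_
        field_simp [hne i]
        ring
      rw [this, ← Finset.mul_sum]
      ring
    have h2 : ∑ i, μ i * (-1 / (μ i + κ)^2) = -∑ i, μ i * ((μ i + κ)^2)⁻¹ := by
      rw [← Finset.sum_neg_distrib]
      exact Finset.sum_congr rfl fun i _ => by ring
    rw [hsum, h2]
    field_simp
  rw [hval]
  exact hg.congr_of_eventuallyEq hev

/-- if differentiable `κ, κ̃ : (0,∞) → (0,∞)` satisfy
`df¹_K(κ̃(λ)) = q·df¹_Σ(κ(λ))` for all `λ > 0`, then for every `λ > 0`: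
`q·(df¹_Σ(κ(λ)) − df²_Σ(κ(λ)))·κ̃(λ)·κ′(λ) = (df¹_K(κ̃(λ)) − df²_K(κ̃(λ)))·κ(λ)·κ̃′(λ)`. -/
theorem stmt12 {N T : ℕ} (Sg : Matrix (Fin N) (Fin N) ℝ) (hSg : Sg.PosSemidef)
    (hSg0 : Sg ≠ 0)
    (K : Matrix (Fin T) (Fin T) ℝ) (hK : K.PosSemidef) (hK0 : K ≠ 0)
    (q : ℝ) (hq : 0 < q)
    (k kt : ℝ → ℝ)
    (hkpos : ∀ lam : ℝ, 0 < lam → 0 < k lam)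
    (hktpos : ∀ lam : ℝ, 0 < lam → 0 < kt lam)
    (hkdiff : ∀ lam : ℝ, 0 < lam → DifferentiableAt ℝ k lam)
    (hktdiff : ∀ lam : ℝ, 0 < lam → DifferentiableAt ℝ kt lam)
    (hmatch : ∀ lam : ℝ, 0 < lam → df1 K (kt lam) = q * df1 Sg (k lam)) :
    ∀ lam : ℝ, 0 < lam →
      q * (df1 Sg (k lam) - df2 Sg (k lam)) * kt lam * deriv k lam =
        (df1 K (kt lam) - df2 K (kt lam)) * k lam * deriv kt lam := by
  intro lam hlam
  have hk := hkpos lam hlam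
  have hkt := hktpos lam hlam
  have HS := df1_hasDerivAt Sg hSg hk
  have HKd := df1_hasDerivAt K hK hkt
  have h1 : HasDerivAt (fun l => df1 K (kt l))
      (-(df1 K (kt lam) - df2 K (kt lam)) / kt lam * deriv kt lam) lam :=
    HKd.comp lam (hktdiff lam hlam).hasDerivAt
  have h2 : HasDerivAt (fun l => q * df1 Sg (k l))
      (q * (-(df1 Sg (k lam) - df2 Sg (k lam)) / k lam * deriv k lam)) lam :=
    (HS.comp lam (hkdiff lam hlam).hasDerivAt).const_mul q
  have heq : (fun l => df1 K (kt l)) =ᶠ[nhds lam] (fun l => q * df1 Sg (k l)) := by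
    filter_upwards [eventually_gt_nhds hlam] with t ht using hmatch t ht
  have huniq := h1.unique (h2.congr_of_eventuallyEq heq)
  field_simp at huniq
  nlinarith [huniq]
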